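/- If a is positive and differentiable and satisfies the vacuum Friedman equation 3(ȧ² + k)/a² - Λ = 0 with Λ > 0 and k = 0, then either a(t) = a(0)·exp(ωt) for all t or a(t) = a(0)·exp(-ωt) for all t, where ω = √(Λ/3), provided ȧ is continuous and never zero. -/

import Mathlib

open Real

private lemma ode_exp (a : ℝ → ℝ) (c : ℝ) (ha : Differentiable ℝ a)
    (h : ∀ t, deriv a t = c * a t) : ∀ t, a t = a 0 * Real.exp (c * t) := by
  have hg : ∀ t, HasDerivAt (fun t => a t * Real.exp (-(c * t))) 0 t := by
    intro t
    have h1 : HasDerivAt a (deriv a t) t := (ha t).hasDerivAt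
    have h2 : HasDerivAt (fun t : ℝ => Real.exp (-(c * t)))
        (Real.exp (-(c * t)) * (-c)) t := by
      have : HasDerivAt (fun t : ℝ => -(c * t)) (-c) t := by
        simpa using (hasDerivAt_id t).const_mul (-c)
      simpa using this.exp
    have := h1.mul h2
    exact this.congr_deriv (by rw [h t]; ring)
  have hconst : ∀ t, a t * Real.exp (-(c * t)) = a 0 * Real.exp (-(c * 0)) := by
    intro t
    exact is_const_of_deriv_eq_zero (fun x => (hg x).differentiableAt)
      (fun x => (hg x).deriv) t 0
  intro t
  have := hconst t
  have he : Real.exp (-(c * t)) ≠ 0 := Real.exp_ne_zero _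
  field_simp at this
  have h2 := congrArg (· * Real.exp (c * t)) this
  rw [mul_assoc, ← Real.exp_add] at h2
  simpa using h2

theorem deSitter_flat_solution
    (a : ℝ → ℝ) (Λ : ℝ) (hΛ : 0 < Λ)
    (ha : Differentiable ℝ a) (hpos : ∀ t, 0 < a t)
    (hcont : Continuous (deriv a)) (hne : ∀ t, deriv a t ≠ 0)
    (hEq : ∀ t, 3 * (deriv a t) ^ 2 / (a t) ^ 2 - Λ = 0) :
    (∀ t, a t = a 0 * Real.exp (Real.sqrt (Λ / 3) * t)) ∨
    (∀ t, a t = a 0 * Real.exp (-(Real.sqrt (Λ / 3)) * t)) := by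
  set ω := Real.sqrt (Λ / 3) with hω
  have hω2 : ω ^ 2 = Λ / 3 := Real.sq_sqrt (by linarith)
  have hωpos : 0 < ω := Real.sqrt_pos.mpr (by linarith)
  -- pointwise: deriv a t = ω * a t ∨ deriv a t = -(ω * a t)
  have hpt : ∀ t, deriv a t = ω * a t ∨ deriv a t = -(ω * a t) := by
    intro t
    have hat := hpos t
    have h1 := hEq t
    have hsq : (deriv a t) ^ 2 = (ω * a t) ^ 2 := by
      have ha2 : (a t) ^ 2 ≠ 0 := by positivity
      field_simp at h1
      rw [mul_pow, hω2]
      nlinarith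
    have habs : |deriv a t| = ω * a t := by
      rw [← Real.sqrt_sq_eq_abs, hsq, Real.sqrt_sq (by positivity)]
    exact (abs_eq (by positivity)).mp habs
  -- sign of deriv a is constant
  rcases (hne 0).lt_or_gt with hneg | hposd
  · -- deriv a 0 < 0, so deriv a t < 0 everywhere
    right
    have hall : ∀ t, deriv a t < 0 := by
      intro t
      by_contra h
      push_neg at h
      have h' : 0 < deriv a t := lt_of_le_of_ne h (Ne.symm (hne t))
      rcases le_total 0 t with ht | ht
      · obtain ⟨s, _, hs⟩ := intermediate_value_Icc ht hcont.continuousOn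
          ⟨le_of_lt hneg, le_of_lt h'⟩
        exact hne s hs
      · obtain ⟨s, _, hs⟩ := intermediate_value_Icc' ht hcont.continuousOn
          ⟨le_of_lt hneg, le_of_lt h'⟩
        exact hne s hs
    have hd : ∀ t, deriv a t = -ω * a t := by
      intro t
      rcases hpt t with h | h
      · exfalso; have := hall t; nlinarith [hpos t]
      · rw [h]; ring
    have := ode_exp a (-ω) ha hd
    simpa using this
  · left
    have hall : ∀ t, 0 < deriv a t := by
      intro t
      by_contra h
      push_neg at h
      have h' : deriv a t < 0 := lt_of_le_of_ne h (hne t)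
      rcases le_total 0 t with ht | ht
      · obtain ⟨s, _, hs⟩ := intermediate_value_Icc' ht hcont.continuousOn
          ⟨le_of_lt h', le_of_lt hposd⟩
        exact hne s hs
      · obtain ⟨s, _, hs⟩ := intermediate_value_Icc ht hcont.continuousOn
          ⟨le_of_lt h', le_of_lt hposd⟩
        exact hne s hs
    have hd : ∀ t, deriv a t = ω * a t := by
      intro t
      rcases hpt t with h | h
      · exact h
      · exfalso; have := hall t; nlinarith [hpos t]
    exact ode_exp a ω ha hd
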